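/- arXiv:2212.03804 — 2 statements merged into one kernel-verified Lean document; each statement's English description precedes it below -/
import Mathlib

section
/- With notation as in the coarse-grain filter, the detail pass filter output f̂^{(d)}_G(e) := f_G(e) − f_G(E_k^{(j)})/2^j (for e ∈ E_k^{(j)}) equals the orthogonal projection of f_G onto the span of the wavelet functions {θ_k^{(ℓ)} : ℓ ≤ j}, and f_G = f̂^{(c)}_G + f̂^{(d)}_G with ⟨f̂^{(c)}_G, f̂^{(d)}_G⟩ = 0. -/
open Finset

/-- Wavelet function: value `2^(-j/2)` on `P (j-1) (2k)`, `-2^(-j/2)` on `P (j-1) (2k+1)`,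
else `0`. -/
noncomputable def waveFun {E : Type*} [DecidableEq E] (P : ℕ → ℕ → Finset E) (j k : ℕ) :
    E → ℝ :=
  fun e =>
    if e ∈ P (j - 1) (2 * k) then (Real.sqrt (2 ^ j))⁻¹
    else if e ∈ P (j - 1) (2 * k + 1) then -(Real.sqrt (2 ^ j))⁻¹
    else 0

/-- Coarse-grain pass filter: on each top block `P j k` the function is replaced by its
block average. -/
noncomputable def coarseFilter {E : Type*} [DecidableEq E] (P : ℕ → ℕ → Finset E)
    (n j : ℕ) (f : E → ℝ) : E → ℝ :=
  fun e => ∑ k ∈ Finset.range (2 ^ (n - j)),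
    if e ∈ P j k then (∑ e' ∈ P j k, f e') / 2 ^ j else 0

/-- Detail pass filter: the residual of the coarse-grain pass filter. -/
noncomputable def detailFilter {E : Type*} [DecidableEq E] (P : ℕ → ℕ → Finset E)
    (n j : ℕ) (f : E → ℝ) : E → ℝ :=
  fun e => f e - coarseFilter P n j f e

section Aux
variable {E : Type*} [Fintype E] [DecidableEq E]

lemma cover_aux (n : ℕ) (P : ℕ → ℕ → Finset E)
    (htop : P n 0 = Finset.univ)
    (hunion : ∀ j k, 1 ≤ j → j ≤ n → k < 2 ^ (n - j) →
      P j k = P (j - 1) (2 * k) ∪ P (j - 1) (2 * k + 1)) :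
    ∀ d, d ≤ n → ∀ e : E, ∃ k, k < 2 ^ d ∧ e ∈ P (n - d) k := by
  intro d
  induction d with
  | zero => intro _ e; exact ⟨0, Nat.one_pos, by simp [htop]⟩
  | succ d ih =>
    intro hd e
    obtain ⟨k, hk, hke⟩ := ih (by omega) e
    have h1 : (1:ℕ) ≤ n - d := by omega
    have h3 : n - (n - d) = d := by omega
    have h4 : n - d - 1 = n - (d + 1) := by omega
    have := hunion (n - d) k h1 (by omega) (by rw [h3]; exact hk)
    rw [this, Finset.mem_union] at hke
    rcases hke with h | h
    · exact ⟨2 * k, by rw [pow_succ]; omega, by rwa [h4] at h⟩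
    · exact ⟨2 * k + 1, by rw [pow_succ]; omega, by rwa [h4] at h⟩

lemma cover (n : ℕ) (P : ℕ → ℕ → Finset E)
    (htop : P n 0 = Finset.univ)
    (hunion : ∀ j k, 1 ≤ j → j ≤ n → k < 2 ^ (n - j) →
      P j k = P (j - 1) (2 * k) ∪ P (j - 1) (2 * k + 1))
    (j : ℕ) (hj : j ≤ n) (e : E) : ∃ k, k < 2 ^ (n - j) ∧ e ∈ P j k := by
  obtain ⟨k, hk, hke⟩ := cover_aux n P htop hunion (n - j) (by omega) e
  rw [show n - (n - j) = j by omega] at hke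
  exact ⟨k, hk, hke⟩

lemma count_one (n : ℕ) (hE : Fintype.card E = 2 ^ n) (P : ℕ → ℕ → Finset E)
    (htop : P n 0 = Finset.univ)
    (hunion : ∀ j k, 1 ≤ j → j ≤ n → k < 2 ^ (n - j) →
      P j k = P (j - 1) (2 * k) ∪ P (j - 1) (2 * k + 1))
    (hcard : ∀ j k, j ≤ n → k < 2 ^ (n - j) → (P j k).card = 2 ^ j)
    (j : ℕ) (hj : j ≤ n) (e : E) :
    (∑ k ∈ Finset.range (2 ^ (n - j)), if e ∈ P j k then (1:ℕ) else 0) = 1 := by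
  set c : E → ℕ := fun e => ∑ k ∈ Finset.range (2 ^ (n - j)), if e ∈ P j k then (1:ℕ) else 0
    with hc
  have hsum : ∑ e : E, c e = 2 ^ n := by
    rw [hc]
    rw [Finset.sum_comm]
    have : ∀ k ∈ Finset.range (2 ^ (n - j)),
        (∑ e : E, if e ∈ P j k then (1:ℕ) else 0) = 2 ^ j := by
      intro k hk
      rw [Finset.sum_ite_mem, Finset.univ_inter, Finset.sum_const, smul_eq_mul, mul_one]
      exact hcard j k hj (Finset.mem_range.mp hk)
    rw [Finset.sum_congr rfl this, Finset.sum_const, Finset.card_range, smul_eq_mul,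
      ← pow_add]
    congr 1
    omega
  have hone : ∀ e : E, 1 ≤ c e := by
    intro e
    obtain ⟨k, hk, hke⟩ := cover n P htop hunion j hj e
    calc (1:ℕ) = if e ∈ P j k then 1 else 0 := by rw [if_pos hke]
    _ ≤ c e := Finset.single_le_sum (f := fun kk => if e ∈ P j kk then (1:ℕ) else 0)
          (fun i _ => Nat.zero_le _) (Finset.mem_range.mpr hk)
  have h1 : ∑ e : E, (1:ℕ) ≤ ∑ e : E, c e := Finset.sum_le_sum fun i _ => hone i
  have h2 : ∑ e : E, (1:ℕ) = ∑ e : E, c e := by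
    rw [hsum, Finset.sum_const, smul_eq_mul, mul_one, Finset.card_univ, hE]
  exact ((Finset.sum_eq_sum_iff_of_le (fun i _ => hone i)).mp h2 e (Finset.mem_univ e)).symm

lemma mem_unique (n : ℕ) (hE : Fintype.card E = 2 ^ n) (P : ℕ → ℕ → Finset E)
    (htop : P n 0 = Finset.univ)
    (hunion : ∀ j k, 1 ≤ j → j ≤ n → k < 2 ^ (n - j) →
      P j k = P (j - 1) (2 * k) ∪ P (j - 1) (2 * k + 1))
    (hcard : ∀ j k, j ≤ n → k < 2 ^ (n - j) → (P j k).card = 2 ^ j)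
    (j : ℕ) (hj : j ≤ n) {k k' : ℕ} (hk : k < 2 ^ (n - j)) (hk' : k' < 2 ^ (n - j))
    (hne : k ≠ k') {e : E} (he : e ∈ P j k) : e ∉ P j k' := by
  intro he'
  have h2 : (2:ℕ) ≤ ∑ kk ∈ Finset.range (2 ^ (n - j)), if e ∈ P j kk then (1:ℕ) else 0 := by
    have hsub : ({k, k'} : Finset ℕ) ⊆ Finset.range (2 ^ (n - j)) := by
      intro x hx
      simp only [Finset.mem_insert, Finset.mem_singleton] at hx
      rcases hx with rfl | rfl <;> exact Finset.mem_range.mpr (by assumption)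
    calc (2:ℕ) = ∑ kk ∈ ({k, k'} : Finset ℕ), if e ∈ P j kk then (1:ℕ) else 0 := by
          rw [Finset.sum_pair hne, if_pos he, if_pos he']
    _ ≤ _ := Finset.sum_le_sum_of_subset hsub
  rw [count_one n hE P htop hunion hcard j hj e] at h2
  omega

lemma coarse_eval (n : ℕ) (hE : Fintype.card E = 2 ^ n) (P : ℕ → ℕ → Finset E)
    (htop : P n 0 = Finset.univ)
    (hunion : ∀ j k, 1 ≤ j → j ≤ n → k < 2 ^ (n - j) →
      P j k = P (j - 1) (2 * k) ∪ P (j - 1) (2 * k + 1))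
    (hcard : ∀ j k, j ≤ n → k < 2 ^ (n - j) → (P j k).card = 2 ^ j)
    (j : ℕ) (hj : j ≤ n) (f : E → ℝ) {k : ℕ} (hk : k < 2 ^ (n - j)) {e : E}
    (he : e ∈ P j k) :
    coarseFilter P n j f e = (∑ e' ∈ P j k, f e') / 2 ^ j := by
  unfold coarseFilter
  rw [Finset.sum_eq_single k]
  · rw [if_pos he]
  · intro k' hk' hne
    rw [if_neg (mem_unique n hE P htop hunion hcard j hj hk (Finset.mem_range.mp hk')
      (fun h => hne (h.symm)) he)]
  · intro h; exact absurd (Finset.mem_range.mpr hk) h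

end Aux

section Aux2
variable {E : Type*} [Fintype E] [DecidableEq E]

lemma coarse_zero (n : ℕ) (hE : Fintype.card E = 2 ^ n) (P : ℕ → ℕ → Finset E)
    (htop : P n 0 = Finset.univ)
    (hunion : ∀ j k, 1 ≤ j → j ≤ n → k < 2 ^ (n - j) →
      P j k = P (j - 1) (2 * k) ∪ P (j - 1) (2 * k + 1))
    (hcard : ∀ j k, j ≤ n → k < 2 ^ (n - j) → (P j k).card = 2 ^ j)
    (f : E → ℝ) (e : E) : coarseFilter P n 0 f e = f e := by
  obtain ⟨k, hk, hke⟩ := cover n P htop hunion 0 (Nat.zero_le n) e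
  rw [coarse_eval n hE P htop hunion hcard 0 (Nat.zero_le n) f hk hke]
  obtain ⟨a, ha⟩ := Finset.card_eq_one.mp (hcard 0 k (Nat.zero_le n) hk)
  rw [ha] at hke ⊢
  rw [Finset.mem_singleton] at hke
  subst hke
  simp

lemma level_lemma (n : ℕ) (hE : Fintype.card E = 2 ^ n) (P : ℕ → ℕ → Finset E)
    (htop : P n 0 = Finset.univ)
    (hunion : ∀ j k, 1 ≤ j → j ≤ n → k < 2 ^ (n - j) →
      P j k = P (j - 1) (2 * k) ∪ P (j - 1) (2 * k + 1))
    (hdisj : ∀ j k, 1 ≤ j → j ≤ n → k < 2 ^ (n - j) →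
      Disjoint (P (j - 1) (2 * k)) (P (j - 1) (2 * k + 1)))
    (hcard : ∀ j k, j ≤ n → k < 2 ^ (n - j) → (P j k).card = 2 ^ j)
    (m : ℕ) (hm1 : 1 ≤ m) (hmn : m ≤ n) (f : E → ℝ) (e : E) :
    ∑ k ∈ Finset.range (2 ^ (n - m)), (∑ e' : E, f e' * waveFun P m k e') * waveFun P m k e
      = coarseFilter P n (m - 1) f e - coarseFilter P n m f e := by
  obtain ⟨k₀, hk₀, he₀⟩ := cover n P htop hunion m hmn e
  have hidx : n - (m - 1) = (n - m) + 1 := by omega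
  have hAk : 2 * k₀ < 2 ^ (n - (m - 1)) := by rw [hidx, pow_succ]; omega
  have hBk : 2 * k₀ + 1 < 2 ^ (n - (m - 1)) := by rw [hidx, pow_succ]; omega
  set A := P (m - 1) (2 * k₀) with hA
  set B := P (m - 1) (2 * k₀ + 1) with hB
  have hAB : P m k₀ = A ∪ B := hunion m k₀ hm1 hmn hk₀
  have hd : Disjoint A B := hdisj m k₀ hm1 hmn hk₀
  set SA := ∑ e' ∈ A, f e' with hSA
  set SB := ∑ e' ∈ B, f e' with hSB
  set s := Real.sqrt (2 ^ m) with hs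
  have hss : s⁻¹ * s⁻¹ = ((2:ℝ) ^ m)⁻¹ := by
    rw [← mul_inv, hs, Real.mul_self_sqrt (by positivity)]
  -- inner product
  have hip : ∑ e' : E, f e' * waveFun P m k₀ e' = (SA - SB) * s⁻¹ := by
    have hsplit : ∀ e' : E, f e' * waveFun P m k₀ e'
        = (if e' ∈ A then f e' * s⁻¹ else 0) + (if e' ∈ B then -(f e' * s⁻¹) else 0) := by
      intro e'
      unfold waveFun
      by_cases h1 : e' ∈ A
      · have h2 : e' ∉ B := Finset.disjoint_left.mp hd h1
        simp [← hA, ← hB, ← hs, h1, h2]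
      · by_cases h2 : e' ∈ B <;> simp [← hA, ← hB, ← hs, h1, h2, mul_neg]
    rw [Finset.sum_congr rfl fun e' _ => hsplit e', Finset.sum_add_distrib,
      Finset.sum_ite_mem, Finset.sum_ite_mem, Finset.univ_inter, Finset.univ_inter,
      Finset.sum_neg_distrib, ← Finset.sum_mul, ← Finset.sum_mul, ← hSA, ← hSB]
    ring
  -- coarse at level m
  have hcm : coarseFilter P n m f e = (SA + SB) / 2 ^ m := by
    rw [coarse_eval n hE P htop hunion hcard m hmn f hk₀ he₀, hAB,
      Finset.sum_union hd]
  -- kill all terms except k₀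
  rw [Finset.sum_eq_single k₀]
  rotate_left
  · intro k hk hne
    have h1 : e ∉ P (m - 1) (2 * k) := by
      intro hmem
      have hsub : P (m - 1) (2 * k) ⊆ P m k := by
        rw [hunion m k hm1 hmn (Finset.mem_range.mp hk)]; exact Finset.subset_union_left
      exact mem_unique n hE P htop hunion hcard m hmn (Finset.mem_range.mp hk) hk₀ hne
        (hsub hmem) he₀
    have h2 : e ∉ P (m - 1) (2 * k + 1) := by
      intro hmem
      have hsub : P (m - 1) (2 * k + 1) ⊆ P m k := by
        rw [hunion m k hm1 hmn (Finset.mem_range.mp hk)]; exact Finset.subset_union_right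
      exact mem_unique n hE P htop hunion hcard m hmn (Finset.mem_range.mp hk) hk₀ hne
        (hsub hmem) he₀
    unfold waveFun
    rw [if_neg h1, if_neg h2, mul_zero]
  · intro h; exact absurd (Finset.mem_range.mpr hk₀) h
  rw [hip]
  have hm' : m = (m - 1) + 1 := by omega
  have h2m : (2:ℝ) ^ m = 2 ^ (m - 1) * 2 := by nth_rewrite 1 [hm']; rw [pow_succ]
  have hpos : (0:ℝ) < 2 ^ (m - 1) := by positivity
  rw [hAB, Finset.mem_union] at he₀
  rcases he₀ with hcase | hcase
  · have hcm1 : coarseFilter P n (m - 1) f e = SA / 2 ^ (m - 1) :=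
      coarse_eval n hE P htop hunion hcard (m - 1) (by omega) f hAk hcase
    have hw : waveFun P m k₀ e = s⁻¹ := by unfold waveFun; rw [← hA, if_pos hcase]
    rw [hw, hcm, hcm1, mul_assoc, hss, h2m]
    field_simp
    ring
  · have hcm1 : coarseFilter P n (m - 1) f e = SB / 2 ^ (m - 1) :=
      coarse_eval n hE P htop hunion hcard (m - 1) (by omega) f hBk hcase
    have he' : e ∉ A := Finset.disjoint_right.mp hd hcase
    have hw : waveFun P m k₀ e = -s⁻¹ := by
      unfold waveFun; rw [← hA, if_neg he', ← hB, if_pos hcase]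
    rw [hw, hcm, hcm1, mul_neg, mul_assoc, hss, h2m]
    field_simp
    ring

end Aux2


theorem detail_filter_is_projection_onto_wavelets
    {E : Type*} [Fintype E] [DecidableEq E] (n : ℕ) (hE : Fintype.card E = 2 ^ n)
    (P : ℕ → ℕ → Finset E)
    (htop : P n 0 = Finset.univ)
    (hunion : ∀ j k, 1 ≤ j → j ≤ n → k < 2 ^ (n - j) →
      P j k = P (j - 1) (2 * k) ∪ P (j - 1) (2 * k + 1))
    (hdisj : ∀ j k, 1 ≤ j → j ≤ n → k < 2 ^ (n - j) →
      Disjoint (P (j - 1) (2 * k)) (P (j - 1) (2 * k + 1)))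
    (hcard : ∀ j k, j ≤ n → k < 2 ^ (n - j) → (P j k).card = 2 ^ j)
    (j : ℕ) (hj : j ≤ n) (f : E → ℝ) :
    (∀ e : E, detailFilter P n j f e =
      ∑ ℓ : Fin j, ∑ k : Fin (2 ^ (n - (ℓ.1 + 1))),
        (∑ e' : E, f e' * waveFun P (ℓ.1 + 1) k.1 e') * waveFun P (ℓ.1 + 1) k.1 e) ∧
    (∀ e : E, f e = coarseFilter P n j f e + detailFilter P n j f e) ∧
    (∑ e : E, coarseFilter P n j f e * detailFilter P n j f e) = 0 := by
  refine ⟨?_, fun e => by unfold detailFilter; ring, ?_⟩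
  · -- part 1, by induction on j
    have main : ∀ j, j ≤ n → ∀ e : E, detailFilter P n j f e =
        ∑ ℓ : Fin j, ∑ k : Fin (2 ^ (n - (ℓ.1 + 1))),
          (∑ e' : E, f e' * waveFun P (ℓ.1 + 1) k.1 e') * waveFun P (ℓ.1 + 1) k.1 e := by
      intro j
      induction j with
      | zero =>
        intro _ e
        simp [detailFilter, coarse_zero n hE P htop hunion hcard f e]
      | succ j ih =>
        intro hj e
        rw [Fin.sum_univ_castSucc]
        simp only [Fin.coe_castSucc, Fin.val_last]
        rw [← ih (by omega) e]
        have hlast : ∑ k : Fin (2 ^ (n - (j + 1))),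
            (∑ e' : E, f e' * waveFun P (j + 1) k.1 e') * waveFun P (j + 1) k.1 e
            = coarseFilter P n j f e - coarseFilter P n (j + 1) f e := by
          rw [Fin.sum_univ_eq_sum_range (fun k =>
            (∑ e' : E, f e' * waveFun P (j + 1) k e') * waveFun P (j + 1) k e)]
          have := level_lemma n hE P htop hunion hdisj hcard (j + 1) (by omega) hj f e
          simpa using this
        rw [hlast]
        unfold detailFilter
        ring
    exact main j hj
  · -- part 3
    have hblock : ∀ k, k < 2 ^ (n - j) → ∑ e ∈ P j k, detailFilter P n j f e = 0 := by
      intro k hk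
      unfold detailFilter
      rw [Finset.sum_sub_distrib]
      have : ∀ e ∈ P j k, coarseFilter P n j f e = (∑ e' ∈ P j k, f e') / 2 ^ j :=
        fun e he => coarse_eval n hE P htop hunion hcard j hj f hk he
      rw [Finset.sum_congr rfl this, Finset.sum_const, hcard j k hj hk, nsmul_eq_mul]
      push_cast
      field_simp
      ring
    have step : ∀ e : E, coarseFilter P n j f e * detailFilter P n j f e
        = ∑ k ∈ Finset.range (2 ^ (n - j)),
            if e ∈ P j k then (∑ e' ∈ P j k, f e') / 2 ^ j * detailFilter P n j f e
            else 0 := by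
      intro e
      rw [show coarseFilter P n j f e = ∑ k ∈ Finset.range (2 ^ (n - j)),
        if e ∈ P j k then (∑ e' ∈ P j k, f e') / 2 ^ j else 0 from rfl, Finset.sum_mul]
      exact Finset.sum_congr rfl fun k _ => by split_ifs <;> simp
    rw [Finset.sum_congr rfl fun e _ => step e, Finset.sum_comm]
    refine Finset.sum_eq_zero fun k hk => ?_
    rw [Finset.sum_ite_mem, Finset.univ_inter, ← Finset.mul_sum,
      hblock k (Finset.mem_range.mp hk), mul_zero]
end

section
/- Let L ∈ {0,1}^{T×M} be an unweighted link stream whose rows are graphs G_t, and let Q^{(diff)} = I − (1/2^j) Σ_k 𝟙_{E_k^{(j)}} 𝟙_{E_k^{(j)}}^⊤ for a partition of the relation set into blocks E_k^{(j)} of size 2^j. Then ‖L Q^{(diff)}‖_F² = Σ_t Σ_k ( m_{t,k} − m_{t,k}²/2^j ), where m_{t,k} is the number of active edges of G_t in block k; equivalently it equals Σ_t E[dist(G_t, G_t*)] where G_t* is uniformly random among graphs structurally equal to G_t. -/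
open Finset Matrix

theorem relational_regularity_of_link_stream
    {T M : ℕ} {κ : Type*} [Fintype κ]
    (j : ℕ) (P : κ → Finset (Fin M))
    (hpart : ∀ i : Fin M, ∃! k : κ, i ∈ P k)
    (hcard : ∀ k, (P k).card = 2 ^ j)
    (L : Matrix (Fin T) (Fin M) ℝ)
    (hL : ∀ t i, L t i = 0 ∨ L t i = 1)
    (Et : Fin T → Finset (Fin M))
    (hEt : ∀ t, Et t = Finset.univ.filter (fun i => L t i = 1))
    (m : Fin T → κ → ℕ) (hm : ∀ t k, m t k = (Et t ∩ P k).card)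
    (Q : Matrix (Fin M) (Fin M) ℝ)
    (hQ : Q = Matrix.of fun i i' =>
      (if i = i' then (1 : ℝ) else 0) -
        (1 / 2 ^ j) * ∑ k : κ,
          (if i ∈ P k then (1 : ℝ) else 0) * (if i' ∈ P k then (1 : ℝ) else 0))
    (Ω : Fin T → Finset (Finset (Fin M)))
    (hΩ : ∀ t, Ω t = (Finset.univ : Finset (Fin M)).powerset.filter
      (fun S => ∀ k : κ, (S ∩ P k).card = m t k)) :
    (∑ t : Fin T, ∑ i : Fin M, ((L * Q) t i) ^ 2) =
      (∑ t : Fin T, ∑ k : κ, ((m t k : ℝ) - (m t k : ℝ) ^ 2 / 2 ^ j)) ∧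
    (∑ t : Fin T, ∑ i : Fin M, ((L * Q) t i) ^ 2) =
      ∑ t : Fin T,
        (∑ S ∈ Ω t, (((Et t).card : ℝ) - ((Et t ∩ S).card : ℝ))) / ((Ω t).card : ℝ) := by
  classical
  set k0 : Fin M → κ := fun i => (hpart i).choose with hk0def
  have hk0 : ∀ i, i ∈ P (k0 i) := fun i => (hpart i).choose_spec.1
  have huniq : ∀ i kk, i ∈ P kk → kk = k0 i := fun i kk h => (hpart i).choose_spec.2 kk h
  have hmemP : ∀ (i : Fin M) (kk : κ), i ∈ P kk ↔ k0 i = kk := by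
    intro i kk
    constructor
    · intro h; exact (huniq i kk h).symm
    · rintro rfl; exact hk0 i
  have h2j : (0:ℝ) < 2 ^ j := by positivity
  have h2jne : (2:ℝ) ^ j ≠ 0 := h2j.ne'
  -- fiberwise decomposition of sums over partitions
  have hfilP : ∀ (s : Finset (Fin M)) (kk : κ),
      (s.filter (fun i => k0 i = kk)) = s ∩ P kk := by
    intro s kk
    ext i
    simp [Finset.mem_filter, Finset.mem_inter, hmemP]
  have hfiberR : ∀ (s : Finset (Fin M)) (f : Fin M → ℝ),
      ∑ i ∈ s, f i = ∑ kk : κ, ∑ i ∈ s ∩ P kk, f i := by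
    intro s f
    rw [← Finset.sum_fiberwise s k0 f]
    exact Finset.sum_congr rfl fun kk _ => by rw [hfilP]
  have hfiberN : ∀ (s : Finset (Fin M)) (f : Fin M → ℕ),
      ∑ i ∈ s, f i = ∑ kk : κ, ∑ i ∈ s ∩ P kk, f i := by
    intro s f
    rw [← Finset.sum_fiberwise s k0 f]
    exact Finset.sum_congr rfl fun kk _ => by rw [hfilP]
  -- row sums over a block
  have hEtP : ∀ (t : Fin T) (kk : κ),
      (P kk).filter (fun i => L t i = 1) = Et t ∩ P kk := by
    intro t kk
    ext i
    simp [hEt, Finset.mem_filter, Finset.mem_inter, and_comm]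
  have hrow : ∀ t kk, ∑ i ∈ P kk, L t i = (m t kk : ℝ) := by
    intro t kk
    have h1 : ∀ i ∈ P kk, L t i = if L t i = 1 then (1:ℝ) else 0 := by
      intro i _; rcases hL t i with h | h <;> simp [h]
    rw [Finset.sum_congr rfl h1, Finset.sum_boole, hEtP, hm]
  -- entry formula
  have hentry : ∀ t i, (L * Q) t i = L t i - (m t (k0 i) : ℝ) / 2 ^ j := by
    intro t i
    have hQcol : ∀ i', Q i' i = (if i' = i then (1:ℝ) else 0) -
        (1 / 2 ^ j) * (if i' ∈ P (k0 i) then 1 else 0) := by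
      intro i'
      rw [hQ]
      simp only [Matrix.of_apply]
      congr 2
      rw [Finset.sum_eq_single (k0 i)]
      · simp [hk0 i]
      · intro kk _ hne
        have hni : i ∉ P kk := fun h => hne (huniq i kk h)
        simp [hni]
      · simp
    rw [Matrix.mul_apply]
    have h1 : ∀ i' : Fin M, L t i' * Q i' i =
        (if i' = i then L t i' else 0) -
          (1 / 2 ^ j) * (if i' ∈ P (k0 i) then L t i' else 0) := by
      intro i'
      rw [hQcol]
      split_ifs with h1 h2 h2 <;> ring
    rw [Finset.sum_congr rfl fun i' _ => h1 i', Finset.sum_sub_distrib,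
      Finset.sum_ite_eq' Finset.univ i (L t), ← Finset.mul_sum,
      Finset.sum_ite_mem, Finset.univ_inter, hrow]
    simp only [Finset.mem_univ, if_true]
    ring
  -- per-time value of the Frobenius sum
  have part1t : ∀ t, ∑ i : Fin M, ((L * Q) t i) ^ 2
      = ∑ kk : κ, ((m t kk : ℝ) - (m t kk : ℝ) ^ 2 / 2 ^ j) := by
    intro t
    rw [hfiberR Finset.univ (fun i => ((L * Q) t i) ^ 2)]
    refine Finset.sum_congr rfl fun kk _ => ?_
    rw [Finset.univ_inter]
    set c : ℝ := (m t kk : ℝ) / 2 ^ j with hc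
    have hik : ∀ i ∈ P kk, ((L * Q) t i) ^ 2
        = L t i - 2 * c * L t i + c ^ 2 := by
      intro i hi
      have hkk : k0 i = kk := (hmemP i kk).1 hi
      have hsq : L t i ^ 2 = L t i := by rcases hL t i with h | h <;> simp [h]
      rw [hentry, hkk, ← hc]
      have : (L t i - c) ^ 2 = L t i ^ 2 - 2 * c * L t i + c ^ 2 := by ring
      rw [this, hsq]
    rw [Finset.sum_congr rfl hik, Finset.sum_add_distrib, Finset.sum_sub_distrib,
      hrow, ← Finset.mul_sum, hrow, Finset.sum_const, hcard, nsmul_eq_mul, hc]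
    push_cast
    field_simp
    ring
  -- part 2: per-time expectation identity
  have part2t : ∀ t,
      (∑ S ∈ Ω t, (((Et t).card : ℝ) - ((Et t ∩ S).card : ℝ))) / ((Ω t).card : ℝ)
        = ∑ kk : κ, ((m t kk : ℝ) - (m t kk : ℝ) ^ 2 / 2 ^ j) := by
    intro t
    have hEtΩ : Et t ∈ Ω t := by
      rw [hΩ]
      simp only [Finset.mem_filter, Finset.mem_powerset]
      exact ⟨Finset.subset_univ _, fun kk => (hm t kk).symm⟩
    have hΩne : ((Ω t).card : ℝ) ≠ 0 := by
      have : 0 < (Ω t).card := Finset.card_pos.2 ⟨Et t, hEtΩ⟩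
      exact_mod_cast this.ne'
    have hScard : ∀ S ∈ Ω t, ∀ kk, (S ∩ P kk).card = m t kk := by
      intro S hS
      rw [hΩ] at hS
      exact (Finset.mem_filter.1 hS).2
    set N : Fin M → ℕ := fun e => ((Ω t).filter (fun S => e ∈ S)).card with hN
    -- swap symmetry : N constant on blocks
    have hNconst : ∀ kk, ∀ i ∈ P kk, ∀ i' ∈ P kk, N i = N i' := by
      intro kk i hi i' hi'
      set σ := Equiv.swap i i' with hσ
      have hfix : ∀ (x : Fin M) (k' : κ), σ x ∈ P k' ↔ x ∈ P k' := by
        intro x k'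
        have hii : ∀ k', i ∈ P k' ↔ i' ∈ P k' := by
          intro k'
          rw [hmemP, hmemP, (hmemP i kk).1 hi, (hmemP i' kk).1 hi']
        rcases eq_or_ne x i with rfl | hxi
        · rw [hσ, Equiv.swap_apply_left]; exact (hii k').symm
        rcases eq_or_ne x i' with rfl | hxi'
        · rw [hσ, Equiv.swap_apply_right]; exact hii k'
        · rw [hσ, Equiv.swap_apply_of_ne_of_ne hxi hxi']
      have himg : ∀ S ∈ Ω t, S.image σ ∈ Ω t := by
        intro S hS
        rw [hΩ] at hS ⊢
        simp only [Finset.mem_filter, Finset.mem_powerset] at hS ⊢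
        refine ⟨Finset.subset_univ _, fun k' => ?_⟩
        have himg2 : S.image σ ∩ P k' = (S ∩ P k').image σ := by
          ext x
          simp only [Finset.mem_inter, Finset.mem_image]
          constructor
          · rintro ⟨⟨y, hy, rfl⟩, hx⟩
            exact ⟨y, ⟨hy, (hfix y k').1 hx⟩, rfl⟩
          · rintro ⟨y, ⟨hy, hyP⟩, rfl⟩
            exact ⟨⟨y, hy, rfl⟩, (hfix y k').2 hyP⟩
        rw [himg2, Finset.card_image_of_injective _ σ.injective]
        exact hS.2 k'
      have hinv : ∀ S : Finset (Fin M), (S.image σ).image σ = S := by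
        intro S
        rw [Finset.image_image]
        have : (σ : Fin M → Fin M) ∘ σ = id := by
          funext x; simp [hσ, Equiv.swap_apply_self]
        rw [this, Finset.image_id]
      refine Finset.card_bij' (fun S _ => S.image σ) (fun S _ => S.image σ)
        ?_ ?_ ?_ ?_
      · intro S hS
        rw [Finset.mem_filter] at hS ⊢
        refine ⟨himg S hS.1, ?_⟩
        have : σ i ∈ S.image σ := Finset.mem_image_of_mem σ hS.2
        rwa [hσ, Equiv.swap_apply_left] at this
      · intro S hS
        rw [Finset.mem_filter] at hS ⊢
        refine ⟨himg S hS.1, ?_⟩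
        have : σ i' ∈ S.image σ := Finset.mem_image_of_mem σ hS.2
        rwa [hσ, Equiv.swap_apply_right] at this
      · intro S _; exact hinv S
      · intro S _; exact hinv S
    -- block sums of N
    have hblocksum : ∀ kk, ∑ i ∈ P kk, N i = m t kk * (Ω t).card := by
      intro kk
      have h1 : ∀ i ∈ P kk, N i = ∑ S ∈ Ω t, if i ∈ S then 1 else 0 := by
        intro i _
        rw [hN]
        exact Finset.card_filter _ _
      rw [Finset.sum_congr rfl h1, Finset.sum_comm]
      have h2 : ∀ S ∈ Ω t, (∑ i ∈ P kk, if i ∈ S then 1 else 0) = m t kk := by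
        intro S hS
        rw [← Finset.card_filter, Finset.filter_mem_eq_inter, Finset.inter_comm]
        exact hScard S hS kk
      rw [Finset.sum_congr rfl h2, Finset.sum_const, smul_eq_mul, mul_comm]
    have hNval : ∀ kk, ∀ i ∈ P kk, 2 ^ j * N i = m t kk * (Ω t).card := by
      intro kk i hi
      calc 2 ^ j * N i = ∑ i' ∈ P kk, N i' := by
            rw [Finset.sum_congr rfl (fun i' hi' => hNconst kk i' hi' i hi),
              Finset.sum_const, hcard, smul_eq_mul]
        _ = m t kk * (Ω t).card := hblocksum kk
    -- main counting identity
    have hsum1 : ∑ S ∈ Ω t, ((Et t ∩ S).card : ℝ)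
        = ∑ kk : κ, (m t kk : ℝ) ^ 2 / 2 ^ j * ((Ω t).card : ℝ) := by
      have h1 : ∑ S ∈ Ω t, (Et t ∩ S).card = ∑ e ∈ Et t, N e := by
        have h2 : ∀ S ∈ Ω t, (Et t ∩ S).card = ∑ e ∈ Et t, if e ∈ S then 1 else 0 := by
          intro S _
          rw [← Finset.card_filter, Finset.filter_mem_eq_inter]
        rw [Finset.sum_congr rfl h2, Finset.sum_comm]
        exact Finset.sum_congr rfl fun e _ => (Finset.card_filter _ _).symm
      have h3 : ∑ e ∈ Et t, (N e : ℝ)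
          = ∑ kk : κ, (m t kk : ℝ) ^ 2 / 2 ^ j * ((Ω t).card : ℝ) := by
        rw [hfiberR (Et t) (fun e => (N e : ℝ))]
        refine Finset.sum_congr rfl fun kk _ => ?_
        have h4 : ∀ e ∈ Et t ∩ P kk,
            (N e : ℝ) = (m t kk : ℝ) * ((Ω t).card : ℝ) / 2 ^ j := by
          intro e he
          have heP : e ∈ P kk := (Finset.mem_inter.1 he).2
          have := hNval kk e heP
          have hcast : (2:ℝ) ^ j * (N e : ℝ) = (m t kk : ℝ) * ((Ω t).card : ℝ) := by
            exact_mod_cast congrArg (Nat.cast : ℕ → ℝ) this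
          field_simp
          linarith [hcast]
        rw [Finset.sum_congr rfl h4, Finset.sum_const, ← hm t kk, nsmul_eq_mul]
        field_simp
      calc ∑ S ∈ Ω t, ((Et t ∩ S).card : ℝ)
          = ((∑ S ∈ Ω t, (Et t ∩ S).card : ℕ) : ℝ) := by push_cast; rfl
        _ = ((∑ e ∈ Et t, N e : ℕ) : ℝ) := by rw [h1]
        _ = ∑ e ∈ Et t, (N e : ℝ) := by push_cast; rfl
        _ = _ := h3
    have hEtcard : ((Et t).card : ℝ) = ∑ kk : κ, (m t kk : ℝ) := by
      have : (Et t).card = ∑ kk : κ, (Et t ∩ P kk).card := by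
        rw [Finset.card_eq_sum_ones, hfiberN (Et t) (fun _ => 1)]
        exact Finset.sum_congr rfl fun kk _ => (Finset.card_eq_sum_ones _).symm
      rw [this]
      push_cast
      exact Finset.sum_congr rfl fun kk _ => by rw [hm]
    rw [Finset.sum_sub_distrib, Finset.sum_const, hsum1, hEtcard, nsmul_eq_mul]
    rw [div_eq_iff hΩne, Finset.sum_mul,
      Finset.sum_congr rfl (fun kk _ =>
        (by ring : ((m t kk : ℝ) - (m t kk : ℝ) ^ 2 / 2 ^ j) * ((Ω t).card : ℝ)
          = ((Ω t).card : ℝ) * (m t kk : ℝ)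
            - (m t kk : ℝ) ^ 2 / 2 ^ j * ((Ω t).card : ℝ))),
      Finset.sum_sub_distrib, ← Finset.mul_sum]
  exact ⟨Finset.sum_congr rfl fun t _ => part1t t,
    Finset.sum_congr rfl fun t _ => by rw [part1t t, ← part2t t]⟩
end
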